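/- Let σ_1 ≥ ... ≥ σ_N ≥ 0, k ≤ N, a_1,...,a_N ∈ [0,1] with Σ a_i = k and Σ_{i=1}^k σ_i² ≤ Σ_{i=1}^N σ_i² a_i + ε σ_k². Let 0 < η ≤ 1 and M = max{i : σ_i ≥ σ_k(1−η)} (with σ_k > 0). Then Σ_{i=M+1}^N σ_i² a_i ≤ ε(1−η)²σ_k²/(2η−η²) ≤ ε(1/η − 1)σ_k². -/

import Mathlib

set_option maxHeartbeats 800000


theorem stmt_11 (N k M : ℕ) (σ a : ℕ → ℝ) (ε η : ℝ)
    (hk1 : 1 ≤ k) (hkN : k ≤ N)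
    (hmono : ∀ i j, 1 ≤ i → i ≤ j → j ≤ N → σ j ≤ σ i)
    (hnn : ∀ i ∈ Finset.Icc 1 N, 0 ≤ σ i)
    (ha : ∀ i ∈ Finset.Icc 1 N, a i ∈ Set.Icc (0 : ℝ) 1)
    (hsum : ∑ i ∈ Finset.Icc 1 N, a i = (k : ℝ))
    (hmain : ∑ i ∈ Finset.Icc 1 k, σ i ^ 2 ≤ ∑ i ∈ Finset.Icc 1 N, σ i ^ 2 * a i + ε * σ k ^ 2)
    (hε : 0 ≤ ε) (hη0 : 0 < η) (hη1 : η ≤ 1) (hσk : 0 < σ k)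
    (hMN : M ≤ N)
    (hM : ∀ i ∈ Finset.Icc 1 N, (σ k * (1 - η) ≤ σ i ↔ i ≤ M)) :
    (∑ i ∈ Finset.Icc (M + 1) N, σ i ^ 2 * a i
        ≤ ε * (1 - η) ^ 2 * σ k ^ 2 / (2 * η - η ^ 2)) ∧
    ε * (1 - η) ^ 2 * σ k ^ 2 / (2 * η - η ^ 2) ≤ ε * (1 / η - 1) * σ k ^ 2 := by
  set s := σ k with hs
  have hkM : k ≤ M := (hM k (Finset.mem_Icc.2 ⟨hk1, hkN⟩)).mp (by nlinarith)
  have e1 : ∀ f : ℕ → ℝ, ∑ i ∈ Finset.Icc 1 N, f i = ∑ i ∈ Finset.Ioc 0 N, f i := by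
    intro f; rw [← Finset.Icc_add_one_left_eq_Ioc, zero_add]
  have e2 : ∀ f : ℕ → ℝ, ∑ i ∈ Finset.Icc 1 k, f i = ∑ i ∈ Finset.Ioc 0 k, f i := by
    intro f; rw [← Finset.Icc_add_one_left_eq_Ioc, zero_add]
  have e3 : ∀ f : ℕ → ℝ, ∑ i ∈ Finset.Icc (M+1) N, f i = ∑ i ∈ Finset.Ioc M N, f i := by
    intro f; rw [← Finset.Icc_add_one_left_eq_Ioc]
  set T := ∑ i ∈ Finset.Ioc M N, σ i ^ 2 * a i with hT
  set B := ∑ i ∈ Finset.Ioc M N, a i with hB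
  set P1 := ∑ i ∈ Finset.Ioc 0 k, σ i ^ 2 * a i with hP1
  set A1 := ∑ i ∈ Finset.Ioc 0 k, a i with hA1
  set P2 := ∑ i ∈ Finset.Ioc k M, σ i ^ 2 * a i with hP2
  set A2 := ∑ i ∈ Finset.Ioc k M, a i with hA2
  set S1 := ∑ i ∈ Finset.Ioc 0 k, σ i ^ 2 with hS1
  clear_value T B P1 A1 P2 A2 S1
  -- membership helpers
  have hmem : ∀ i, i ∈ Finset.Ioc M N → i ∈ Finset.Icc 1 N := by
    intro i hi
    rw [Finset.mem_Ioc] at hi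
    exact Finset.mem_Icc.2 ⟨by omega, hi.2⟩
  -- split hmain
  have hsplit : ∑ i ∈ Finset.Ioc 0 N, σ i ^ 2 * a i = P1 + P2 + T := by
    rw [hP1, hP2, hT, Finset.sum_Ioc_consecutive _ (Nat.zero_le k) hkM,
      Finset.sum_Ioc_consecutive _ (Nat.zero_le M) hMN]
  have hsplita : ∑ i ∈ Finset.Ioc 0 N, a i = A1 + A2 + B := by
    rw [hA1, hA2, hB, Finset.sum_Ioc_consecutive _ (Nat.zero_le k) hkM,
      Finset.sum_Ioc_consecutive _ (Nat.zero_le M) hMN]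
  rw [e1, e2] at hmain
  rw [e1, hsplita] at hsum
  rw [hsplit] at hmain
  -- h1 : s^2 * (k - A1) ≤ S1 - P1
  have h1 : ∑ i ∈ Finset.Ioc 0 k, (s^2 - s^2 * a i) ≤ ∑ i ∈ Finset.Ioc 0 k, (σ i ^2 - σ i ^2 * a i) := by
    apply Finset.sum_le_sum
    intro i hi
    rw [Finset.mem_Ioc] at hi
    have hiN : i ∈ Finset.Icc 1 N := Finset.mem_Icc.2 ⟨hi.1, le_trans hi.2 hkN⟩
    have h1 : s ≤ σ i := hmono i k hi.1 hi.2 hkN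
    have h2 := hnn i hiN
    have h3 := (ha i hiN).2
    nlinarith [mul_nonneg (mul_nonneg (sub_nonneg.2 h1) (by linarith : (0:ℝ) ≤ σ i + s)) (sub_nonneg.2 h3)]
  rw [Finset.sum_sub_distrib, Finset.sum_sub_distrib, Finset.sum_const, ← Finset.mul_sum,
    Nat.card_Ioc] at h1
  simp only [Nat.sub_zero, nsmul_eq_mul] at h1
  -- h2 : P2 ≤ s^2 * A2
  have h2 : ∑ i ∈ Finset.Ioc k M, σ i ^ 2 * a i ≤ ∑ i ∈ Finset.Ioc k M, s^2 * a i := by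
    apply Finset.sum_le_sum
    intro i hi
    rw [Finset.mem_Ioc] at hi
    have hiN : i ∈ Finset.Icc 1 N := Finset.mem_Icc.2 ⟨le_trans hk1 (le_of_lt hi.1), le_trans hi.2 hMN⟩
    have h1 : σ i ≤ s := hmono k i hk1 (le_of_lt hi.1) (le_trans hi.2 hMN)
    have h2 := hnn i hiN
    have h3 := (ha i hiN).1
    nlinarith [mul_nonneg (mul_nonneg (sub_nonneg.2 h1) (by linarith : (0:ℝ) ≤ s + σ i)) h3]
  rw [← Finset.mul_sum] at h2
  -- step1 : T ≤ (s*(1-η))^2 * B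
  have hTB : ∑ i ∈ Finset.Ioc M N, σ i ^ 2 * a i ≤ ∑ i ∈ Finset.Ioc M N, (s*(1-η))^2 * a i := by
    apply Finset.sum_le_sum
    intro i hi
    have hiN := hmem i hi
    rw [Finset.mem_Ioc] at hi
    have hlt : σ i < s * (1-η) := by
      by_contra h
      push_neg at h
      exact absurd ((hM i hiN).mp h) (by omega)
    have h2 := hnn i hiN
    have h3 := (ha i hiN).1
    nlinarith [mul_nonneg (mul_nonneg (sub_nonneg.2 hlt.le) (by linarith : (0:ℝ) ≤ s*(1-η) + σ i)) h3]
  rw [← Finset.mul_sum] at hTB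
  rw [← hS1, ← hP1, ← hA1] at h1
  rw [← hP2, ← hA2] at h2
  rw [← hT, ← hB] at hTB
  have hBnn : 0 ≤ B := hB ▸ Finset.sum_nonneg fun i hi => (ha i (hmem i hi)).1
  have hkey : s^2 * B ≤ T + ε * s^2 := by nlinarith
  have hD : 0 < 2*η - η^2 := by nlinarith
  have hBD : B * (2*η - η^2) ≤ ε := by nlinarith [mul_pos hσk hσk]
  constructor
  · rw [e3, ← hT, le_div_iff₀ hD]
    calc T * (2*η - η^2) ≤ (s*(1-η))^2 * B * (2*η - η^2) := by nlinarith
      _ ≤ (s*(1-η))^2 * ε := by nlinarith [sq_nonneg (s*(1-η))]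
      _ = ε * (1-η)^2 * s^2 := by ring
  · rw [div_le_iff₀ hD]
    have heq : ε * (1/η - 1) * s^2 * (2*η - η^2) = ε * (1-η) * (2-η) * s^2 := by
      field_simp
    rw [heq]
    nlinarith [mul_nonneg (mul_nonneg hε (by linarith : (0:ℝ) ≤ 1-η)) (sq_nonneg s)]
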